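/- For fixed real numbers ℓ < u, the function c ↦ Φ(u − c) − Φ(ℓ − c) is strictly positive and log-concave in c ∈ ℝ, where Φ is the standard normal CDF. -/

import Mathlib

open MeasureTheory Set Filter Topology

namespace StdNormalAux

noncomputable def g (t : ℝ) : ℝ := Real.exp (-t ^ 2 / 2)

lemma g_pos (t : ℝ) : 0 < g t := Real.exp_pos _

lemma continuous_g : Continuous g := by
  unfold g; fun_prop

lemma hasDerivAt_g (t : ℝ) : HasDerivAt g (-t * g t) t := by
  have h1 : HasDerivAt (fun t : ℝ => -t ^ 2 / 2) (-t) t := by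
    have := ((hasDerivAt_pow 2 t).neg).div_const 2
    refine this.congr_deriv ?_
    push_cast
    ring
  have := h1.exp
  show HasDerivAt (fun t => Real.exp (-t ^ 2 / 2)) (-t * Real.exp (-t ^ 2 / 2)) t
  simpa [g, mul_comm] using this

lemma integrable_g : Integrable g := by
  have h := integrable_exp_neg_mul_sq (by norm_num : (0:ℝ) < 1/2)
  have : (fun x : ℝ => Real.exp (-(1/2) * x ^ 2)) = g := by
    funext x; unfold g; congr 1; ring
  rwa [this] at h

lemma integrable_tg : Integrable (fun t : ℝ => t * g t) := by
  have h := integrable_mul_exp_neg_mul_sq (by norm_num : (0:ℝ) < 1/2)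
  have : (fun x : ℝ => x * Real.exp (-(1/2) * x ^ 2)) = fun t : ℝ => t * g t := by
    funext x; unfold g; congr 2; ring
  rwa [this] at h

noncomputable def J (x : ℝ) : ℝ := ∫ t in (0:ℝ)..x, g t

noncomputable def I (a b : ℝ) : ℝ := ∫ t in a..b, g t

lemma intervalIntegrable_g (a b : ℝ) : IntervalIntegrable g volume a b :=
  integrable_g.intervalIntegrable

lemma I_eq (a b : ℝ) : I a b = J b - J a := by
  have h := intervalIntegral.integral_add_adjacent_intervals
    (intervalIntegrable_g 0 a) (intervalIntegrable_g a b)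
  unfold I J
  linarith

lemma hasDerivAt_J (x : ℝ) : HasDerivAt J (g x) x :=
  (continuous_g.integral_hasStrictDerivAt 0 x).hasDerivAt

lemma hasDerivAt_I (a x : ℝ) : HasDerivAt (fun b => I a b) (g x) x := by
  have h : (fun b => I a b) = fun b => J b - J a := funext (I_eq a)
  rw [h]
  simpa using (hasDerivAt_J x).sub_const (J a)

lemma I_pos {a b : ℝ} (h : a < b) : 0 < I a b :=
  intervalIntegral.intervalIntegral_pos_of_pos (intervalIntegrable_g a b) g_pos h

lemma I_same (a : ℝ) : I a a = 0 := intervalIntegral.integral_same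

lemma I_nonneg {a b : ℝ} (h : a ≤ b) : 0 ≤ I a b := by
  rcases eq_or_lt_of_le h with rfl | h
  · rw [I_same]
  · exact (I_pos h).le

lemma I_mono {a b c : ℝ} (hab : a ≤ b) (hbc : b ≤ c) : I a b ≤ I a c := by
  have h := intervalIntegral.integral_add_adjacent_intervals
    (intervalIntegrable_g a b) (intervalIntegrable_g b c)
  have h2 : 0 ≤ I b c := I_nonneg hbc
  unfold I at *
  linarith

lemma tendsto_g : Tendsto g atTop (𝓝 0) := by
  have h1 : Tendsto (fun t : ℝ => -t ^ 2 / 2) atTop atBot := by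
    have h2 : Tendsto (fun t : ℝ => t ^ 2 / 2) atTop atTop :=
      (tendsto_pow_atTop (two_ne_zero)).atTop_div_const (by norm_num)
    have := tendsto_neg_atTop_atBot.comp h2
    refine this.congr fun x => ?_
    simp [neg_div]
  exact Real.tendsto_exp_atBot.comp h1

lemma tendsto_tg : Tendsto (fun t : ℝ => t * g t) atTop (𝓝 0) := by
  have hmaj : Tendsto (fun t : ℝ => t * Real.exp (-t)) atTop (𝓝 0) := by
    simpa using Real.tendsto_pow_mul_exp_neg_atTop_nhds_zero 1
  refine squeeze_zero' ?_ ?_ hmaj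
  · filter_upwards [eventually_ge_atTop (0:ℝ)] with t ht
    exact mul_nonneg ht (g_pos t).le
  · filter_upwards [eventually_ge_atTop (2:ℝ)] with t ht
    have h1 : -t ^ 2 / 2 ≤ -t := by nlinarith
    have h2 : g t ≤ Real.exp (-t) := Real.exp_le_exp.2 h1
    exact mul_le_mul_of_nonneg_left h2 (by linarith)

lemma tendsto_I (a : ℝ) : Tendsto (fun b => I a b) atTop (𝓝 (∫ t in Ioi a, g t)) :=
  intervalIntegral_tendsto_integral_Ioi a integrable_g.integrableOn tendsto_id

lemma integral_tg_Ioi (a : ℝ) : ∫ t in Ioi a, t * g t = g a := by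
  have hderiv : ∀ x ∈ Ici a, HasDerivAt (fun t => -g t) (x * g x) x := by
    intro x _
    exact (hasDerivAt_g x).neg.congr_deriv (by ring)
  have hint : IntegrableOn (fun t : ℝ => t * g t) (Ioi a) := integrable_tg.integrableOn
  have hlim : Tendsto (fun t => -g t) atTop (𝓝 0) := by
    simpa using tendsto_g.neg
  have := integral_Ioi_of_hasDerivAt_of_tendsto' hderiv hint hlim
  simpa using this

lemma integral_g_Ioi_nonneg (a : ℝ) : 0 ≤ ∫ t in Ioi a, g t :=
  setIntegral_nonneg measurableSet_Ioi fun t _ => (g_pos t).le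

lemma mills (a : ℝ) : a * ∫ t in Ioi a, g t ≤ g a := by
  rcases le_or_gt a 0 with ha | ha
  · have := integral_g_Ioi_nonneg a
    nlinarith [g_pos a]
  · have h1 : ∫ t in Ioi a, g t ≤ ∫ t in Ioi a, (1/a) * (t * g t) := by
      refine setIntegral_mono_on integrable_g.integrableOn
        (integrable_tg.integrableOn.const_mul _) measurableSet_Ioi ?_
      intro x hx
      have hx' : a < x := hx
      have hg := g_pos x
      rw [div_mul_eq_mul_div, one_mul, le_div_iff₀ ha]
      nlinarith
    have h2 : ∫ t in Ioi a, (1/a) * (t * g t) = (1/a) * g a := by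
      rw [integral_const_mul, integral_tg_Ioi]
    rw [h2] at h1
    calc a * ∫ t in Ioi a, g t ≤ a * ((1/a) * g a) :=
          mul_le_mul_of_nonneg_left h1 ha.le
      _ = g a := by field_simp

noncomputable def G (a b : ℝ) : ℝ := 2 * b * g a - b * g b - a * g a - (b ^ 2 - 1) * I a b

noncomputable def F (a b : ℝ) : ℝ := (g a - g b) ^ 2 - I a b * (a * g a - b * g b)

lemma hasDerivAt_G (a b : ℝ) : HasDerivAt (G a) (2 * g a - 2 * (b * I a b)) b := by
  have h1 : HasDerivAt (fun x : ℝ => 2 * x * g a) (2 * g a) b := by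
    simpa using (((hasDerivAt_id b).const_mul 2).mul_const (g a))
  have h2 : HasDerivAt (fun x : ℝ => x * g x) (1 * g b + b * (-b * g b)) b :=
    (hasDerivAt_id b).mul (hasDerivAt_g b)
  have h3 : HasDerivAt (fun x : ℝ => (x ^ 2 - 1) * I a x)
      ((2 * b ^ 1) * I a b + (b ^ 2 - 1) * g b) b := by
    exact (((hasDerivAt_pow 2 b).sub_const 1).mul (hasDerivAt_I a b)).congr_deriv (by push_cast; ring)
  have h := ((h1.sub h2).sub_const (a * g a)).sub h3
  have hfun : (fun x : ℝ => 2 * x * g a - x * g x - a * g a - (x ^ 2 - 1) * I a x) = G a := by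
    funext x; unfold G; ring
  rw [← hfun]
  exact h.congr_deriv (by ring)

lemma hasDerivAt_F (a b : ℝ) : HasDerivAt (F a) (g b * G a b) b := by
  have h4 : HasDerivAt (fun x : ℝ => (g a - g x) ^ 2)
      ((2 : ℕ) * (g a - g b) ^ 1 * (-(-b * g b))) b :=
    ((hasDerivAt_g b).const_sub (g a)).pow 2
  have h5 : HasDerivAt (fun x : ℝ => I a x * (a * g a - x * g x))
      (g b * (a * g a - b * g b) + I a b * (-(1 * g b + b * (-b * g b)))) b :=
    (hasDerivAt_I a b).mul (((hasDerivAt_id b).mul (hasDerivAt_g b)).const_sub (a * g a))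
  have h := h4.sub h5
  have hfun : (fun x : ℝ => (g a - g x) ^ 2 - I a x * (a * g a - x * g x)) = F a := by
    funext x; unfold F; ring
  rw [← hfun]
  exact h.congr_deriv (by unfold G; push_cast; ring)

lemma continuous_G (a : ℝ) : Continuous (G a) :=
  continuous_iff_continuousAt.2 fun x => (hasDerivAt_G a x).differentiableAt.continuousAt

lemma continuous_F (a : ℝ) : Continuous (F a) :=
  continuous_iff_continuousAt.2 fun x => (hasDerivAt_F a x).differentiableAt.continuousAt

lemma G_same (a : ℝ) : G a a = 0 := by
  unfold G; rw [I_same]; ring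

lemma F_same (a : ℝ) : F a a = 0 := by
  unfold F; rw [I_same]; ring

lemma G_neg_persist {a b₀ b₁ : ℝ} (ha : a ≤ b₀) (h01 : b₀ ≤ b₁) (hG : G a b₀ < 0) :
    G a b₁ < 0 := by
  by_contra hcon
  push_neg at hcon
  have hlt : b₀ < b₁ := by
    rcases eq_or_lt_of_le h01 with rfl | h
    · exact absurd hcon (not_le.2 hG)
    · exact h
  have haa : a < b₀ := by
    rcases eq_or_lt_of_le ha with rfl | h
    · rw [G_same] at hG; exact absurd hG (lt_irrefl 0)
    · exact h
  obtain ⟨η, hη, hηeq⟩ := exists_hasDerivAt_eq_slope (G a)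
    (fun x => 2 * g a - 2 * (x * I a x)) haa (continuous_G a).continuousOn
    (fun x _ => hasDerivAt_G a x)
  obtain ⟨ξ, hξ, hξeq⟩ := exists_hasDerivAt_eq_slope (G a)
    (fun x => 2 * g a - 2 * (x * I a x)) hlt (continuous_G a).continuousOn
    (fun x _ => hasDerivAt_G a x)
  rw [G_same] at hηeq
  have hslope1 : (G a b₀ - 0) / (b₀ - a) < 0 :=
    div_neg_of_neg_of_pos (by linarith) (by linarith)
  have hηI : g a < η * I a η := by
    rw [← hηeq] at hslope1; linarith
  have hslope2 : 0 < (G a b₁ - G a b₀) / (b₁ - b₀) :=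
    div_pos (by linarith) (by linarith)
  have hξI : ξ * I a ξ < g a := by
    rw [← hξeq] at hslope2; linarith
  have haη : a < η := hη.1
  have hIη : 0 < I a η := I_pos haη
  have hηpos : 0 < η := by nlinarith [g_pos a]
  have hηξ : η ≤ ξ := le_of_lt (lt_trans hη.2 hξ.1)
  have hIle : I a η ≤ I a ξ := I_mono haη.le hηξ
  have : η * I a η ≤ ξ * I a ξ :=
    mul_le_mul hηξ hIle hIη.le (by linarith)
  linarith

lemma key (a b : ℝ) (hab : a ≤ b) : I a b * (a * g a - b * g b) ≤ (g a - g b) ^ 2 := by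
  suffices h : 0 ≤ F a b by
    unfold F at h; linarith
  rcases eq_or_lt_of_le hab with rfl | hab
  · rw [F_same]
  by_cases hG : ∀ x ∈ Icc a b, 0 ≤ G a x
  · have mono : MonotoneOn (F a) (Icc a b) := by
      refine monotoneOn_of_hasDerivWithinAt_nonneg (convex_Icc a b)
        (continuous_F a).continuousOn
        (fun x _ => (hasDerivAt_F a x).hasDerivWithinAt) ?_
      intro x hx
      have hx' : x ∈ Icc a b := interior_subset hx
      exact mul_nonneg (g_pos x).le (hG x hx')
    have := mono (left_mem_Icc.2 hab.le) (right_mem_Icc.2 hab.le) hab.le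
    rw [F_same] at this
    exact this
  · push_neg at hG
    obtain ⟨b₀, hb₀, hGb₀⟩ := hG
    have hanti : AntitoneOn (F a) (Ici b) := by
      refine antitoneOn_of_hasDerivWithinAt_nonpos (convex_Ici b)
        (continuous_F a).continuousOn
        (fun x _ => (hasDerivAt_F a x).hasDerivWithinAt) ?_
      intro x hx
      rw [interior_Ici] at hx
      have hGx : G a x < 0 :=
        G_neg_persist hb₀.1 (le_trans hb₀.2 (le_of_lt hx)) hGb₀
      exact mul_nonpos_of_nonneg_of_nonpos (g_pos x).le hGx.le
    have hF_lim : Tendsto (F a) atTop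
        (𝓝 ((g a - 0) ^ 2 - (∫ t in Ioi a, g t) * (a * g a - 0))) := by
      unfold F
      exact ((tendsto_const_nhds.sub tendsto_g).pow 2).sub
        ((tendsto_I a).mul (tendsto_const_nhds.sub tendsto_tg))
    have hFb : ∀ᶠ x in atTop, F a x ≤ F a b := by
      filter_upwards [eventually_ge_atTop b] with x hx
      exact hanti self_mem_Ici hx hx
    have h0 : (g a - 0) ^ 2 - (∫ t in Ioi a, g t) * (a * g a - 0) ≤ F a b :=
      le_of_tendsto hF_lim hFb
    have hm := mills a
    have hI0 := integral_g_Ioi_nonneg a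
    nlinarith [g_pos a, mul_le_mul_of_nonneg_right hm (g_pos a).le]

end StdNormalAux

open StdNormalAux

/-- For ℓ < u, the function c ↦ Φ(u − c) − Φ(ℓ − c) is strictly positive and
log-concave in c, where Φ is the standard normal CDF. -/
theorem stmt1 (Φ : ℝ → ℝ)
    (hΦ : ∀ a, Φ a = ∫ ν in Set.Iic a,
      (1 / Real.sqrt (2 * Real.pi)) * Real.exp (-ν ^ 2 / 2))
    (ℓ u : ℝ) (hlu : ℓ < u) :
    (∀ c : ℝ, 0 < Φ (u - c) - Φ (ℓ - c)) ∧
    ConcaveOn ℝ Set.univ (fun c : ℝ => Real.log (Φ (u - c) - Φ (ℓ - c))) := by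
  set C : ℝ := 1 / Real.sqrt (2 * Real.pi) with hCdef
  have hC : 0 < C := by
    rw [hCdef]
    positivity
  -- Φ y - Φ x = C * I x y
  have hdiff : ∀ x y : ℝ, Φ y - Φ x = C * I x y := by
    intro x y
    have hint : ∀ z : ℝ, IntegrableOn (fun ν : ℝ => C * g ν) (Set.Iic z) :=
      fun z => (integrable_g.const_mul C).integrableOn
    have h1 := intervalIntegral.integral_Iic_sub_Iic (hint x) (hint y)
    have h2 : (∫ t in x..y, C * g t) = C * I x y := by
      unfold I
      rw [intervalIntegral.integral_const_mul]
    rw [hΦ x, hΦ y]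
    calc (∫ ν in Set.Iic y, (1 / Real.sqrt (2 * Real.pi)) * Real.exp (-ν ^ 2 / 2))
          - ∫ ν in Set.Iic x, (1 / Real.sqrt (2 * Real.pi)) * Real.exp (-ν ^ 2 / 2)
        = (∫ ν in Set.Iic y, C * g ν) - ∫ ν in Set.Iic x, C * g ν := rfl
      _ = ∫ t in x..y, C * g t := h1
      _ = C * I x y := h2
  have hpos : ∀ c : ℝ, 0 < Φ (u - c) - Φ (ℓ - c) := by
    intro c
    rw [hdiff (ℓ - c) (u - c)]
    exact mul_pos hC (I_pos (by linarith))
  refine ⟨hpos, ?_⟩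
  -- the smooth representative
  set N : ℝ → ℝ := fun c => C * I (ℓ - c) (u - c) with hNdef
  set N' : ℝ → ℝ := fun c => C * (g (ℓ - c) - g (u - c)) with hN'def
  set N'' : ℝ → ℝ := fun c => C * ((ℓ - c) * g (ℓ - c) - (u - c) * g (u - c)) with hN''def
  have hNpos : ∀ c, 0 < N c := fun c => mul_pos hC (I_pos (by linarith))
  have hI_split : ∀ c : ℝ, I (ℓ - c) (u - c) = J (u - c) - J (ℓ - c) := fun c => I_eq _ _
  have hN : ∀ c, HasDerivAt N (N' c) c := by
    intro c
    have hfun : N = fun c => C * (J (u - c) - J (ℓ - c)) := by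
      funext x; rw [hNdef]; simp only [hI_split]
    rw [hfun]
    have h1 : HasDerivAt (fun c : ℝ => u - c) (-1) c := by
      simpa using (hasDerivAt_id c).const_sub u
    have h2 : HasDerivAt (fun c : ℝ => ℓ - c) (-1) c := by
      simpa using (hasDerivAt_id c).const_sub ℓ
    have h3 : HasDerivAt (fun c : ℝ => J (u - c)) (g (u - c) * -1) c :=
      (hasDerivAt_J (u - c)).comp c h1
    have h4 : HasDerivAt (fun c : ℝ => J (ℓ - c)) (g (ℓ - c) * -1) c :=
      (hasDerivAt_J (ℓ - c)).comp c h2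
    exact ((h3.sub h4).const_mul C).congr_deriv (by rw [hN'def]; ring)
  have hN' : ∀ c, HasDerivAt N' (N'' c) c := by
    intro c
    have h1 : HasDerivAt (fun c : ℝ => u - c) (-1) c := by
      simpa using (hasDerivAt_id c).const_sub u
    have h2 : HasDerivAt (fun c : ℝ => ℓ - c) (-1) c := by
      simpa using (hasDerivAt_id c).const_sub ℓ
    have h3 : HasDerivAt (fun c : ℝ => g (u - c)) ((-(u - c) * g (u - c)) * -1) c :=
      (hasDerivAt_g (u - c)).comp c h1
    have h4 : HasDerivAt (fun c : ℝ => g (ℓ - c)) ((-(ℓ - c) * g (ℓ - c)) * -1) c :=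
      (hasDerivAt_g (ℓ - c)).comp c h2
    exact ((h4.sub h3).const_mul C).congr_deriv (by rw [hN''def]; ring)
  -- log N and its derivatives
  set L : ℝ → ℝ := fun c => Real.log (N c) with hLdef
  set L' : ℝ → ℝ := fun c => N' c / N c with hL'def
  have hL : ∀ c, HasDerivAt L (L' c) c := fun c => (hN c).log (hNpos c).ne'
  have hL' : ∀ c, HasDerivAt L' ((N'' c * N c - N' c * N' c) / N c ^ 2) c :=
    fun c => (hN' c).div (hN c) (hNpos c).ne'
  have hderivL : deriv L = L' := funext fun c => (hL c).deriv
  have hconc : ConcaveOn ℝ Set.univ L := by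
    refine concaveOn_univ_of_deriv2_nonpos
      (fun c => (hL c).differentiableAt) ?_ ?_
    · rw [hderivL]
      exact fun c => (hL' c).differentiableAt
    · intro x
      have h2 : deriv^[2] L x = (N'' x * N x - N' x * N' x) / N x ^ 2 := by
        have : deriv^[2] L = deriv (deriv L) := rfl
        rw [this, hderivL]
        exact (hL' x).deriv
      rw [h2]
      apply div_nonpos_of_nonpos_of_nonneg _ (sq_nonneg _)
      -- N'' x * N x ≤ N' x * N' x
      have hk := key (ℓ - x) (u - x) (by linarith)
      have hk2 := mul_le_mul_of_nonneg_left hk (sq_nonneg C)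
      rw [hN''def, hNdef, hN'def]
      simp only []
      nlinarith [hk2]
  have hfun : (fun c : ℝ => Real.log (Φ (u - c) - Φ (ℓ - c))) = L := by
    funext c
    rw [hLdef]
    simp only [hNdef]
    rw [hdiff (ℓ - c) (u - c)]
  rw [hfun]
  exact hconc
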